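/- Let M be the set of fixed-point-free involutions in the symmetric group on the set {1, 2, 3, 4, 5, 6} (M has exactly 15 elements), and let the subgroup H of S₆ generated by the permutations (3 4)(5 6) and (1 2)(3 5)(4 6) act on M by conjugation. Then this action has exactly 8 orbits: exactly 3 orbits of size 1, exactly 4 orbits of size 2, and exactly 1 orbit of size 4. -/

import Mathlib

open Equiv

def FPFInv : Set (Equiv.Perm (Fin 6)) := {σ | σ * σ = 1 ∧ ∀ i, σ i ≠ i}

def H14 : Subgroup (Equiv.Perm (Fin 6)) :=
  Subgroup.closure
    {Equiv.swap 2 3 * Equiv.swap 4 5,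
     Equiv.swap 0 1 * Equiv.swap 2 4 * Equiv.swap 3 5}

def Orbits14 : Set (Set (Equiv.Perm (Fin 6))) :=
  (fun σ => {τ | ∃ g ∈ H14, g * σ * g⁻¹ = τ}) '' FPFInv

def pa : Perm (Fin 6) := Equiv.swap 2 3 * Equiv.swap 4 5
def pb : Perm (Fin 6) := Equiv.swap 0 1 * Equiv.swap 2 4 * Equiv.swap 3 5
def Kfin : Finset (Perm (Fin 6)) := {1, pa, pb, pa * pb}

def Ksub : Subgroup (Perm (Fin 6)) where
  carrier := ↑Kfin
  one_mem' := by decide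
  mul_mem' := by
    intro x y hx hy
    simp only [Finset.coe_insert, Set.mem_insert_iff, Finset.coe_singleton,
      Set.mem_singleton_iff, Kfin] at *
    rcases hx with h|h|h|h <;> rcases hy with h'|h'|h'|h' <;> subst h <;> subst h' <;> decide
  inv_mem' := by
    intro x hx
    simp only [Finset.coe_insert, Set.mem_insert_iff, Finset.coe_singleton,
      Set.mem_singleton_iff, Kfin] at *
    rcases hx with h|h|h|h <;> subst h <;> decide

lemma mem_H14 (g : Perm (Fin 6)) : g ∈ H14 ↔ g ∈ Kfin := by
  constructor
  · intro hg
    have : H14 ≤ Ksub := by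
      rw [H14, Subgroup.closure_le]
      intro x hx
      rcases hx with h | h <;> subst h <;> exact (Finset.mem_coe (s := Kfin)).mpr (by decide)
    exact this hg
  · intro hg
    have ha : pa ∈ H14 := Subgroup.subset_closure (by left; rfl)
    have hb : pb ∈ H14 := Subgroup.subset_closure (by right; rfl)
    fin_cases hg
    · exact one_mem _
    · exact ha
    · exact hb
    · exact mul_mem ha hb

def orbFin (σ : Perm (Fin 6)) : Finset (Perm (Fin 6)) :=
  Kfin.image (fun g => g * σ * g⁻¹)

lemma orb_eq (σ : Perm (Fin 6)) :
    {τ | ∃ g ∈ H14, g * σ * g⁻¹ = τ} = ↑(orbFin σ) := by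
  ext τ
  simp [orbFin, mem_H14]

def FPFfin : Finset (Perm (Fin 6)) :=
  Finset.univ.filter (fun σ => σ * σ = 1 ∧ ∀ i, σ i ≠ i)

lemma FPF_eq : FPFInv = ↑FPFfin := by
  ext σ; simp [FPFInv, FPFfin]

def OrbFinset : Finset (Finset (Perm (Fin 6))) := FPFfin.image orbFin

lemma Orbits_eq : Orbits14 = (↑) '' (↑OrbFinset : Set (Finset (Perm (Fin 6)))) := by
  rw [Orbits14, FPF_eq]
  ext S
  constructor
  · rintro ⟨σ, hσ, rfl⟩
    exact ⟨orbFin σ, by simpa [OrbFinset] using ⟨σ, hσ, rfl⟩, (orb_eq σ).symm⟩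
  · rintro ⟨F, hF, rfl⟩
    simp only [OrbFinset, Finset.coe_image, Set.mem_image, Finset.mem_coe,
      Finset.mem_image] at hF
    obtain ⟨σ, hσ, rfl⟩ := hF
    exact ⟨σ, hσ, orb_eq σ⟩

lemma ncard_image (T : Finset (Finset (Perm (Fin 6)))) :
    ((↑) '' (↑T : Set (Finset (Perm (Fin 6)))) : Set (Set (Perm (Fin 6)))).ncard = T.card := by
  rw [Set.ncard_image_of_injective _ (fun A B h => Finset.coe_injective h)]
  simp [Set.ncard_coe_finset]

theorem stmt14 :
    FPFInv.ncard = 15 ∧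
    Orbits14.ncard = 8 ∧
    {S ∈ Orbits14 | S.ncard = 1}.ncard = 3 ∧
    {S ∈ Orbits14 | S.ncard = 2}.ncard = 4 ∧
    {S ∈ Orbits14 | S.ncard = 4}.ncard = 1 := by
  have hsep : ∀ n : ℕ, {S ∈ Orbits14 | S.ncard = n} =
      (↑) '' (↑(OrbFinset.filter (fun F => F.card = n)) : Set (Finset (Perm (Fin 6)))) := by
    intro n
    rw [Orbits_eq]
    ext S
    simp only [Set.mem_setOf_eq, Set.mem_image, Finset.mem_coe, Finset.mem_filter]
    constructor
    · rintro ⟨⟨F, hF, rfl⟩, hc⟩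
      exact ⟨F, ⟨hF, by rwa [Set.ncard_coe_finset] at hc⟩, rfl⟩
    · rintro ⟨F, ⟨hF, hc⟩, rfl⟩
      exact ⟨⟨F, hF, rfl⟩, by rwa [Set.ncard_coe_finset]⟩
  refine ⟨?_, ?_, ?_, ?_, ?_⟩
  · rw [FPF_eq, Set.ncard_coe_finset]; decide
  · rw [Orbits_eq, ncard_image]; decide
  · rw [hsep, ncard_image]; decide
  · rw [hsep, ncard_image]; decide
  · rw [hsep, ncard_image]; decide
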